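/- The function x ↦ ψ'(x) − 1/x − 1/(2x²) is completely monotonic on (0,∞). -/

import Mathlib

open Real Filter Topology Finset

noncomputable def trigamma (x : ℝ) : ℝ :=
  iteratedDeriv 2 (fun y => Real.log (Real.Gamma y)) x

/-- shifted sum `∑ 1/(k+1)^2` is summable -/
lemma sum_inv_sq_summable : Summable (fun k : ℕ => 1 / ((k : ℝ) + 1) ^ 2) := by
  have := (summable_nat_add_iff (f := fun n : ℕ => 1 / (n : ℝ) ^ 2) 1).2
    (Real.summable_one_div_nat_pow.2 one_lt_two)
  simpa using this

lemma key_bound {m : ℕ} (hm : 2 ≤ m) {a y : ℝ} (ha : 0 < a) (hy : a ≤ y) (k : ℕ) :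
    1 / (y + k) ^ m ≤ (4 * (1 + 1 / a ^ m)) * (1 / ((k : ℝ) + 1) ^ 2) := by
  have hya : 0 < y := lt_of_lt_of_le ha hy
  rcases Nat.eq_zero_or_pos k with hk | hk
  · subst hk
    simp only [Nat.cast_zero, add_zero, zero_add, one_pow, div_one]
    have h1 : 1 / y ^ m ≤ 1 / a ^ m := by
      apply one_div_le_one_div_of_le (by positivity) (pow_le_pow_left₀ ha.le hy m)
    nlinarith [pow_pos ha m, one_div_pos.2 (pow_pos ha m)]
  · have hk1 : (1 : ℝ) ≤ k := by exact_mod_cast hk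
    have h1 : 1 / (y + k) ^ m ≤ 1 / (k : ℝ) ^ m := by
      apply one_div_le_one_div_of_le (by positivity)
      exact pow_le_pow_left₀ (by positivity) (by linarith) m
    have h2 : (1 : ℝ) / (k : ℝ) ^ m ≤ 1 / (k : ℝ) ^ 2 := by
      apply one_div_le_one_div_of_le (by positivity)
      exact pow_le_pow_right₀ hk1 hm
    have h3 : ((k : ℝ) + 1) ^ 2 ≤ 4 * (k : ℝ) ^ 2 := by nlinarith
    have h4 : (1 : ℝ) / (k : ℝ) ^ 2 ≤ 4 * (1 / ((k : ℝ) + 1) ^ 2) := by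
      rw [mul_one_div, div_le_div_iff₀ (by positivity) (by positivity)]
      nlinarith
    have h5 : (0:ℝ) < 1 / ((k:ℝ)+1)^2 := by positivity
    have h6 : (0:ℝ) ≤ 1 / a ^ m := by positivity
    calc 1 / (y + k) ^ m ≤ 1 / (k:ℝ)^2 := le_trans h1 h2
      _ ≤ 4 * (1 / ((k : ℝ) + 1) ^ 2) := h4
      _ ≤ (4 * (1 + 1 / a ^ m)) * (1 / ((k : ℝ) + 1) ^ 2) := by nlinarith

lemma summable_S {m : ℕ} (hm : 2 ≤ m) {x : ℝ} (hx : 0 < x) :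
    Summable (fun k : ℕ => 1 / (x + k) ^ m) := by
  apply Summable.of_nonneg_of_le (fun k => by positivity)
    (fun k => key_bound hm hx le_rfl k)
  exact (sum_inv_sq_summable.mul_left _)

noncomputable def S (m : ℕ) (x : ℝ) : ℝ := ∑' k : ℕ, 1 / (x + k) ^ m


/-- AM-GM with natural weights -/
lemma amgm_nat (p q : ℕ) (a b : ℝ) (ha : 0 ≤ a) (hb : 0 ≤ b) (hpq : 0 < p + q) :
    ((p + q : ℕ) : ℝ) * (a ^ p * b ^ q) ≤ p * a ^ (p + q) + q * b ^ (p + q) := by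
  have hm : (0 : ℝ) < ((p + q : ℕ) : ℝ) := by exact_mod_cast hpq
  have w1 : (0:ℝ) ≤ (p : ℝ) / ((p+q : ℕ) : ℝ) := by positivity
  have w2 : (0:ℝ) ≤ (q : ℝ) / ((p+q : ℕ) : ℝ) := by positivity
  have hw : (p : ℝ) / ((p+q : ℕ) : ℝ) + (q : ℝ) / ((p+q : ℕ) : ℝ) = 1 := by
    rw [← add_div, div_eq_one_iff_eq hm.ne']
    push_cast; ring
  have key := Real.geom_mean_le_arith_mean2_weighted w1 w2
    (pow_nonneg ha (p+q)) (pow_nonneg hb (p+q)) hw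
  have e1 : (a ^ (p+q)) ^ ((p : ℝ) / ((p+q : ℕ) : ℝ)) = a ^ p := by
    rw [← Real.rpow_natCast a (p+q), ← Real.rpow_mul ha, ← Real.rpow_natCast a p]
    congr 1
    rw [mul_comm, div_mul_cancel₀ _ hm.ne']
  have e2 : (b ^ (p+q)) ^ ((q : ℝ) / ((p+q : ℕ) : ℝ)) = b ^ q := by
    rw [← Real.rpow_natCast b (p+q), ← Real.rpow_mul hb, ← Real.rpow_natCast b q]
    congr 1
    rw [mul_comm, div_mul_cancel₀ _ hm.ne']
  rw [e1, e2, div_mul_eq_mul_div, div_mul_eq_mul_div, ← add_div] at key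
  have := mul_le_mul_of_nonneg_left key hm.le
  rw [mul_div_cancel₀ _ hm.ne'] at this
  linarith

lemma key_ineq {m : ℕ} (hm : 2 ≤ m) {a : ℝ} (ha : 0 < a) :
    2 * (a * (a+1)^m - a^m * (a+1)) ≤ ((m:ℝ) - 1) * (a^m + (a+1)^m) := by
  set b := a + 1 with hb_def
  have hb : 0 < b := by rw [hb_def]; linarith
  set N := m - 1 with hN
  have hm1 : N + 1 = m := by omega
  have hgeom : b ^ N - a ^ N = ∑ i ∈ range N, b ^ i * a ^ (N - 1 - i) := by
    have := geom_sum₂_mul b a N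
    rw [show b - a = 1 by rw [hb_def]; ring, mul_one] at this
    exact this.symm
  -- Gauss sum
  have hG : ∑ i ∈ range N, ((i : ℝ) + 1) = (N : ℝ) * ((N : ℝ) + 1) / 2 := by
    have h2 : (∑ i ∈ range (N+1), (i:ℕ)) * 2 = (N+1) * N := Finset.sum_range_id_mul_two (N+1)
    have h3 : ∑ i ∈ range (N+1), (i:ℕ) = ∑ i ∈ range N, (i+1) := by
      rw [Finset.sum_range_succ']
      simp
    rw [h3] at h2
    have := congrArg (fun z : ℕ => (z : ℝ)) h2
    push_cast at this
    linarith
  -- reflected sum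
  have hG2 : ∑ i ∈ range N, ((N : ℝ) - (i:ℝ)) = (N : ℝ) * ((N : ℝ) + 1) / 2 := by
    rw [← hG]
    rw [← Finset.sum_range_reflect (fun i => ((i:ℝ) + 1)) N]
    apply Finset.sum_congr rfl
    intro i hi
    have hi' : i < N := Finset.mem_range.1 hi
    have : ((N - 1 - i : ℕ) : ℝ) = (N : ℝ) - 1 - (i : ℝ) := by
      have h1 : (1:ℕ) + i ≤ N := by omega
      push_cast [Nat.cast_sub (by omega : i ≤ N - 1), Nat.cast_sub (by omega : 1 ≤ N)]
      ring
    rw [this]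
    ring
  -- main chain, multiplied by m
  have main : (m:ℝ) * (2 * (a * b^m - a^m * b)) ≤ (m:ℝ) * (((m:ℝ) - 1) * (a^m + b^m)) := by
    have step1 : (m:ℝ) * (2 * (a * b^m - a^m * b)) =
        ∑ i ∈ range N, 2 * ((m:ℝ) * (a ^ (m-1-i) * b ^ (i+1))) := by
      have hfac : a * b^m - a^m * b = a * b * (b ^ N - a ^ N) := by
        rw [← hm1]; ring
      have h0 : (m:ℝ) * (2 * (a * b^m - a^m * b)) =
          ((m:ℝ) * 2 * a * b) * (∑ i ∈ range N, b ^ i * a ^ (N - 1 - i)) := by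
        rw [hfac, ← hgeom]; ring
      rw [h0, Finset.mul_sum]
      apply Finset.sum_congr rfl
      intro i hi
      have hi' : i < N := Finset.mem_range.1 hi
      have e1 : m - 1 - i = (N - 1 - i) + 1 := by omega
      rw [e1]
      ring
    have step2 : ∀ i ∈ range N, 2 * ((m:ℝ) * (a ^ (m-1-i) * b ^ (i+1))) ≤
        2 * (((m-1-i : ℕ):ℝ) * a ^ m + ((i+1 : ℕ):ℝ) * b ^ m) := by
      intro i hi
      have hi' : i < N := Finset.mem_range.1 hi
      have hpq : (m-1-i) + (i+1) = m := by omega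
      have := amgm_nat (m-1-i) (i+1) a b ha.le hb.le (by omega)
      rw [hpq] at this
      push_cast at this ⊢
      linarith
    have step3 : ∑ i ∈ range N, 2 * (((m-1-i : ℕ):ℝ) * a ^ m + ((i+1 : ℕ):ℝ) * b ^ m)
        = (m:ℝ) * (((m:ℝ) - 1) * (a^m + b^m)) := by
      have hNr : (N:ℝ) = (m:ℝ) - 1 := by
        rw [hN, Nat.cast_sub (by omega : 1 ≤ m)]; norm_num
      have e : ∀ i ∈ range N, 2 * (((m-1-i : ℕ):ℝ) * a ^ m + ((i+1 : ℕ):ℝ) * b ^ m)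
          = 2 * a^m * ((N:ℝ) - i) + 2 * b^m * ((i:ℝ)+1) := by
        intro i hi
        have hi' : i < N := Finset.mem_range.1 hi
        rw [Nat.cast_sub (by omega : i ≤ m - 1)]
        have hc : ((m - 1 : ℕ):ℝ) = (N:ℝ) := by rw [hN]
        rw [hc]
        push_cast
        ring
      rw [Finset.sum_congr rfl e, Finset.sum_add_distrib, ← Finset.mul_sum, ← Finset.mul_sum,
        hG, hG2, hNr]
      ring
    calc (m:ℝ) * (2 * (a * b^m - a^m * b))
        = ∑ i ∈ range N, 2 * ((m:ℝ) * (a ^ (m-1-i) * b ^ (i+1))) := step1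
      _ ≤ ∑ i ∈ range N, 2 * (((m-1-i : ℕ):ℝ) * a ^ m + ((i+1 : ℕ):ℝ) * b ^ m) :=
          Finset.sum_le_sum step2
      _ = (m:ℝ) * (((m:ℝ) - 1) * (a^m + b^m)) := step3
  have hmpos : (0:ℝ) < (m:ℝ) := by positivity
  exact le_of_mul_le_mul_left main hmpos

lemma T_step {m : ℕ} (hm : 2 ≤ m) {a : ℝ} (ha : 0 < a) :
    (1/(((m:ℝ)-1) * a^(m-1)) + 1/(2*a^m)) - (1/(((m:ℝ)-1) * (a+1)^(m-1)) + 1/(2*(a+1)^m))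
      ≤ 1/a^m := by
  have hb : (0:ℝ) < a + 1 := by linarith
  set b := a + 1 with hb_def
  have hc : (0:ℝ) < (m:ℝ) - 1 := by
    have : (2:ℝ) ≤ (m:ℝ) := by exact_mod_cast hm
    linarith
  set c := (m:ℝ) - 1 with hc_def
  have hA : (0:ℝ) < a^(m-1) := pow_pos ha _
  have hB : (0:ℝ) < b^(m-1) := pow_pos hb _
  have hP : (0:ℝ) < a^m := pow_pos ha _
  have hQ : (0:ℝ) < b^m := pow_pos hb _
  have hPA : a^m = a^(m-1) * a := by rw [← pow_succ]; congr 1; omega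
  have hQB : b^m = b^(m-1) * b := by rw [← pow_succ]; congr 1; omega
  have key := key_ineq hm ha
  rw [← hb_def, ← hc_def] at key
  have h1 : 1/(c * a^(m-1)) - 1/(c * b^(m-1)) = (a * b^m - b * a^m)/(c * (a^m * b^m)) := by
    rw [hPA, hQB]
    field_simp
  have h2 : (a^m + b^m)/(2 * (a^m * b^m)) = 1/(2*a^m) + 1/(2*b^m) := by
    field_simp
    ring
  have main : (a * b^m - b * a^m)/(c * (a^m * b^m)) ≤ (a^m + b^m)/(2 * (a^m * b^m)) := by
    rw [div_le_div_iff₀ (by positivity) (by positivity)]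
    nlinarith [mul_le_mul_of_nonneg_right key (mul_pos hP hQ).le]
  have h3 : 2 * (1/(2*a^m)) = 1/a^m := by
    field_simp
  linarith [h1, h2, main, h3]

lemma T_partial {m : ℕ} (hm : 2 ≤ m) {x : ℝ} (hx : 0 < x) (N : ℕ) :
    (1/(((m:ℝ)-1) * x^(m-1)) + 1/(2*x^m))
      - (1/(((m:ℝ)-1) * (x+(N:ℝ))^(m-1)) + 1/(2*(x+(N:ℝ))^m))
      ≤ ∑ k ∈ range N, 1/(x+(k:ℝ))^m := by
  induction N with
  | zero => simp
  | succ n ih =>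
    have hxn : (0:ℝ) < x + n := by positivity
    have hstep := T_step hm hxn
    have hcast : x + ((n+1 : ℕ):ℝ) = (x + (n:ℝ)) + 1 := by push_cast; ring
    rw [Finset.sum_range_succ, hcast]
    linarith [ih, hstep]

lemma T_tendsto {m : ℕ} (hm : 2 ≤ m) {x : ℝ} (hx : 0 < x) :
    Tendsto (fun N : ℕ => 1/(((m:ℝ)-1) * (x+(N:ℝ))^(m-1)) + 1/(2*(x+(N:ℝ))^m))
      atTop (𝓝 0) := by
  have hc : (0:ℝ) < (m:ℝ) - 1 := by
    have : (2:ℝ) ≤ (m:ℝ) := by exact_mod_cast hm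
    linarith
  have hbase : Tendsto (fun N : ℕ => x + (N:ℝ)) atTop atTop :=
    tendsto_atTop_add_const_left _ _ tendsto_natCast_atTop_atTop
  have t1 : Tendsto (fun N : ℕ => ((m:ℝ)-1) * (x+(N:ℝ))^(m-1)) atTop atTop :=
    (tendsto_pow_atTop (by omega : m - 1 ≠ 0)).comp hbase |>.const_mul_atTop hc
  have t2 : Tendsto (fun N : ℕ => 2 * (x+(N:ℝ))^m) atTop atTop :=
    (tendsto_pow_atTop (by omega : m ≠ 0)).comp hbase |>.const_mul_atTop two_pos
  have := (t1.inv_tendsto_atTop).add (t2.inv_tendsto_atTop)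
  simpa [one_div] using this

lemma S_lower {m : ℕ} (hm : 2 ≤ m) {x : ℝ} (hx : 0 < x) :
    1/(((m:ℝ)-1) * x^(m-1)) + 1/(2*x^m) ≤ S m x := by
  have hsum := summable_S hm hx
  have hb : ∀ N : ℕ,
      (1/(((m:ℝ)-1) * x^(m-1)) + 1/(2*x^m))
        - (1/(((m:ℝ)-1) * (x+(N:ℝ))^(m-1)) + 1/(2*(x+(N:ℝ))^m)) ≤ S m x := by
    intro N
    refine le_trans (T_partial hm hx N) ?_
    exact hsum.sum_le_tsum (range N) (fun i _ => by positivity)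
  have hT :
      Tendsto (fun N : ℕ => (1/(((m:ℝ)-1) * x^(m-1)) + 1/(2*x^m))
        - (1/(((m:ℝ)-1) * (x+(N:ℝ))^(m-1)) + 1/(2*(x+(N:ℝ))^m))) atTop
        (𝓝 ((1/(((m:ℝ)-1) * x^(m-1)) + 1/(2*x^m)) - 0)) :=
    tendsto_const_nhds.sub (T_tendsto hm hx)
  rw [sub_zero] at hT
  exact le_of_tendsto hT (Filter.Eventually.of_forall hb)


lemma log_one_add_bounds {t : ℝ} (ht : 0 ≤ t) :
    0 ≤ t - Real.log (1 + t) ∧ t - Real.log (1 + t) ≤ t ^ 2 := by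
  have h1t : (0:ℝ) < 1 + t := by linarith
  constructor
  · have := Real.log_le_sub_one_of_pos h1t
    linarith
  · have hlow := Real.one_sub_inv_le_log_of_pos h1t
    have e1 : 1 - (1 + t)⁻¹ = t / (1 + t) := by field_simp; ring
    rw [e1] at hlow
    have e2 : t - t / (1 + t) = t ^ 2 / (1 + t) := by field_simp; ring
    have e3 : t ^ 2 / (1 + t) ≤ t ^ 2 := by
      apply div_le_self (sq_nonneg t) (by linarith)
    linarith

lemma summable_Lterm {x : ℝ} (hx : 0 ≤ x) :
    Summable (fun k : ℕ => x / ((k:ℝ)+1) - Real.log (1 + x / ((k:ℝ)+1))) := by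
  refine Summable.of_nonneg_of_le
    (fun k => (log_one_add_bounds (by positivity : (0:ℝ) ≤ x / ((k:ℝ)+1))).1)
    (fun k => ?_) (sum_inv_sq_summable.mul_left (x^2))
  calc x / ((k:ℝ)+1) - Real.log (1 + x / ((k:ℝ)+1)) ≤ (x / ((k:ℝ)+1))^2 :=
        (log_one_add_bounds (by positivity)).2
      _ = x^2 * (1/((k:ℝ)+1)^2) := by rw [div_pow]; ring

lemma summable_psi1term {x : ℝ} (hx : 0 < x) :
    Summable (fun k : ℕ => 1/((k:ℝ)+1) - 1/(x+(k:ℝ)+1)) := by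
  refine Summable.of_nonneg_of_le (fun k => ?_) (fun k => ?_) (sum_inv_sq_summable.mul_left x)
  · have h1 : (0:ℝ) < (k:ℝ)+1 := by positivity
    have h2 : (0:ℝ) < x+(k:ℝ)+1 := by linarith
    have := one_div_le_one_div_of_le h1 (by linarith : (k:ℝ)+1 ≤ x+(k:ℝ)+1)
    linarith
  · have h1 : (0:ℝ) < (k:ℝ)+1 := by positivity
    have h2 : (0:ℝ) < x+(k:ℝ)+1 := by linarith
    have e : 1/((k:ℝ)+1) - 1/(x+(k:ℝ)+1) = x / (((k:ℝ)+1) * (x+(k:ℝ)+1)) := by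
      field_simp
      ring
    rw [e, mul_one_div]
    apply div_le_div_of_nonneg_left hx.le (by positivity)
    nlinarith
section
open Real Filter Topology Finset

lemma log_GammaSeq_eq {x : ℝ} (hx : 0 < x) {n : ℕ} (hn : 0 < n) :
    Real.log (Real.GammaSeq x n) =
      -(((harmonic n : ℚ):ℝ) - Real.log n) * x - Real.log x
        + ∑ k ∈ range n, (x/((k:ℝ)+1) - Real.log (1 + x/((k:ℝ)+1))) := by
  have hnR : (0:ℝ) < (n:ℝ) := by exact_mod_cast hn
  have hfact : (0:ℝ) < (n.factorial : ℝ) := by exact_mod_cast n.factorial_pos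
  have hterm : ∀ j : ℕ, (0:ℝ) < x + j := fun j => by positivity
  have hprodpos : (0:ℝ) < ∏ j ∈ range (n+1), (x + (j:ℝ)) :=
    Finset.prod_pos (fun j _ => hterm j)
  rw [Real.GammaSeq, Real.log_div (by positivity) hprodpos.ne',
    Real.log_mul (by positivity) hfact.ne', Real.log_rpow hnR]
  -- log n!
  have hfac2 : Real.log (n.factorial : ℝ) = ∑ k ∈ range n, Real.log ((k:ℝ)+1) := by
    rw [← Finset.prod_range_add_one_eq_factorial]
    push_cast
    rw [Real.log_prod]
    intro j _
    positivity
  -- log of denominator product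
  have hden : Real.log (∏ j ∈ range (n+1), (x + (j:ℝ)))
      = Real.log x + ∑ j ∈ range n, Real.log (x + (j:ℝ) + 1) := by
    rw [Real.log_prod (fun j _ => (hterm j).ne'), Finset.sum_range_succ']
    push_cast
    simp only [add_zero]
    rw [add_comm]
    simp [add_assoc]
  -- expand log(1 + x/(k+1))
  have hlog1p : ∀ k : ℕ, Real.log (1 + x/((k:ℝ)+1))
      = Real.log (x + (k:ℝ) + 1) - Real.log ((k:ℝ)+1) := by
    intro k
    have hk1 : (0:ℝ) < (k:ℝ)+1 := by positivity
    rw [← Real.log_div (by positivity) hk1.ne']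
    congr 1
    field_simp
    ring
  -- harmonic cast
  have hH : ((harmonic n : ℚ):ℝ) = ∑ k ∈ range n, 1/((k:ℝ)+1) := by
    rw [harmonic]
    push_cast
    simp [one_div]
  rw [hfac2, hden, hH]
  simp_rw [hlog1p]
  have e1 : ∑ k ∈ range n, (x/((k:ℝ)+1) - (Real.log (x+(k:ℝ)+1) - Real.log ((k:ℝ)+1)))
      = x * (∑ k ∈ range n, 1/((k:ℝ)+1)) - (∑ k ∈ range n, Real.log (x+(k:ℝ)+1))
        + ∑ k ∈ range n, Real.log ((k:ℝ)+1) := by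
    rw [Finset.sum_sub_distrib, Finset.sum_sub_distrib, Finset.mul_sum]
    simp_rw [mul_one_div]
    ring
  rw [e1]
  ring

end
section
open Real Filter Topology Finset

noncomputable def Lfun (x : ℝ) : ℝ := ∑' k : ℕ, (x/((k:ℝ)+1) - Real.log (1 + x/((k:ℝ)+1)))

noncomputable def psi1 (x : ℝ) : ℝ := ∑' k : ℕ, (1/((k:ℝ)+1) - 1/(x+(k:ℝ)+1))

lemma log_Gamma_eq {x : ℝ} (hx : 0 < x) :
    Real.log (Real.Gamma x)
      = -Real.eulerMascheroniConstant * x - Real.log x + Lfun x := by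
  have h1 : Tendsto (fun n : ℕ => Real.log (Real.GammaSeq x n)) atTop
      (𝓝 (Real.log (Real.Gamma x))) :=
    (Real.GammaSeq_tendsto_Gamma x).log (Real.Gamma_pos_of_pos hx).ne'
  have h2 : Tendsto (fun n : ℕ => -(((harmonic n : ℚ):ℝ) - Real.log n) * x - Real.log x
      + ∑ k ∈ range n, (x/((k:ℝ)+1) - Real.log (1 + x/((k:ℝ)+1)))) atTop
      (𝓝 (-Real.eulerMascheroniConstant * x - Real.log x + Lfun x)) := by
    apply Tendsto.add
    · exact (((Real.tendsto_harmonic_sub_log).neg.mul_const x)).sub_const (Real.log x)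
    · exact (summable_Lterm hx.le).hasSum.tendsto_sum_nat
  refine tendsto_nhds_unique h1 (h2.congr' ?_)
  filter_upwards [eventually_gt_atTop 0] with n hn
  exact (log_GammaSeq_eq hx hn).symm

lemma hasDerivAt_Lfun {y : ℝ} (hy : 0 < y) : HasDerivAt Lfun (psi1 y) y := by
  have ht : IsOpen (Set.Ioo (0:ℝ) (y+1)) := isOpen_Ioo
  have h't : IsPreconnected (Set.Ioo (0:ℝ) (y+1)) := (convex_Ioo _ _).isPreconnected
  have hmem : y ∈ Set.Ioo (0:ℝ) (y+1) := ⟨hy, by linarith⟩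
  refine hasDerivAt_tsum_of_isPreconnected
    (g := fun (k:ℕ) (z:ℝ) => z/((k:ℝ)+1) - Real.log (1 + z/((k:ℝ)+1)))
    (g' := fun (k:ℕ) (z:ℝ) => 1/((k:ℝ)+1) - 1/(z+(k:ℝ)+1))
    (u := fun k : ℕ => (y+1) * (1/((k:ℝ)+1)^2))
    (sum_inv_sq_summable.mul_left _) ht h't ?_ ?_ hmem (summable_Lterm hy.le) hmem
  · intro k z hz
    have hk1 : (0:ℝ) < (k:ℝ)+1 := by positivity
    have hz0 : (0:ℝ) < z := hz.1
    have hpos : (0:ℝ) < 1 + z/((k:ℝ)+1) := by positivity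
    have h1 : HasDerivAt (fun w : ℝ => w/((k:ℝ)+1)) (1/((k:ℝ)+1)) z := by
      simpa using (hasDerivAt_id z).div_const ((k:ℝ)+1)
    have h2 : HasDerivAt (fun w : ℝ => Real.log (1 + w/((k:ℝ)+1)))
        ((1/((k:ℝ)+1)) / (1 + z/((k:ℝ)+1))) z := (h1.const_add 1).log hpos.ne'
    have h3 := h1.sub h2
    convert h3 using 1
    · rfl
    have e : (1/((k:ℝ)+1)) / (1 + z/((k:ℝ)+1)) = 1/(z+(k:ℝ)+1) := by
      rw [div_div]
      congr 1
      field_simp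
      ring
    rw [e]
  · intro k z hz
    have hk1 : (0:ℝ) < (k:ℝ)+1 := by positivity
    have hz0 : (0:ℝ) < z := hz.1
    have hzk : (0:ℝ) < z+(k:ℝ)+1 := by linarith
    have hnn : (0:ℝ) ≤ 1/((k:ℝ)+1) - 1/(z+(k:ℝ)+1) := by
      have := one_div_le_one_div_of_le hk1 (by linarith : (k:ℝ)+1 ≤ z+(k:ℝ)+1)
      linarith
    rw [Real.norm_eq_abs, abs_of_nonneg hnn]
    have e : 1/((k:ℝ)+1) - 1/(z+(k:ℝ)+1) = z / (((k:ℝ)+1) * (z+(k:ℝ)+1)) := by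
      field_simp
      ring
    rw [e]
    calc z / (((k:ℝ)+1) * (z+(k:ℝ)+1)) ≤ (y+1) / (((k:ℝ)+1) * ((k:ℝ)+1)) := by
          gcongr <;> nlinarith [hz.2]
      _ = (y+1) * (1/((k:ℝ)+1)^2) := by
          rw [mul_one_div, sq]
end
section
open Real Filter Topology Finset

lemma hasDerivAt_psi1 {y : ℝ} (hy : 0 < y) :
    HasDerivAt psi1 (∑' k : ℕ, 1/(y+(k:ℝ)+1)^2) y := by
  refine hasDerivAt_tsum_of_isPreconnected
    (g := fun (k:ℕ) (z:ℝ) => 1/((k:ℝ)+1) - 1/(z+(k:ℝ)+1))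
    (g' := fun (k:ℕ) (z:ℝ) => 1/(z+(k:ℝ)+1)^2)
    (u := fun k : ℕ => 1/((k:ℝ)+1)^2)
    sum_inv_sq_summable isOpen_Ioi isPreconnected_Ioi ?_ ?_
    (Set.mem_Ioi.2 hy) (summable_psi1term hy) (Set.mem_Ioi.2 hy)
  · intro k z hz
    have hz0 : (0:ℝ) < z := hz
    have hzk : (0:ℝ) < z+(k:ℝ)+1 := by positivity
    have h0 : HasDerivAt (fun w : ℝ => w+(k:ℝ)+1) 1 z :=
      ((hasDerivAt_id z).add_const ((k:ℝ))).add_const 1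
    have h1 := h0.inv hzk.ne'
    have h2 := h1.const_sub (1/((k:ℝ)+1))
    simpa only [one_div, neg_div, neg_neg, Pi.inv_apply] using h2
  · intro k z hz
    have hz0 : (0:ℝ) < z := hz
    have hzk : (0:ℝ) < z+(k:ℝ)+1 := by positivity
    have hk1 : (0:ℝ) < (k:ℝ)+1 := by positivity
    rw [Real.norm_eq_abs, abs_of_nonneg (by positivity)]
    apply one_div_le_one_div_of_le (by positivity)
    nlinarith

lemma S_two_eq {x : ℝ} (hx : 0 < x) :
    S 2 x = 1/x^2 + ∑' k : ℕ, 1/(x+(k:ℝ)+1)^2 := by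
  rw [S, Summable.tsum_eq_zero_add (summable_S le_rfl hx)]
  congr 1
  · norm_num
  · apply tsum_congr
    intro k
    push_cast
    ring_nf

noncomputable def psi (y : ℝ) : ℝ := -Real.eulerMascheroniConstant - y⁻¹ + psi1 y

lemma deriv_logGamma {y : ℝ} (hy : 0 < y) :
    deriv (fun z => Real.log (Real.Gamma z)) y = psi y := by
  have hev : (fun z => Real.log (Real.Gamma z)) =ᶠ[𝓝 y]
      (fun z => -Real.eulerMascheroniConstant * z - Real.log z + Lfun z) := by
    filter_upwards [Ioi_mem_nhds hy] with z hz using log_Gamma_eq hz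
  rw [hev.deriv_eq]
  have hG : HasDerivAt (fun z => -Real.eulerMascheroniConstant * z - Real.log z + Lfun z)
      (-Real.eulerMascheroniConstant - y⁻¹ + psi1 y) y := by
    have h1 : HasDerivAt (fun z : ℝ => -Real.eulerMascheroniConstant * z)
        (-Real.eulerMascheroniConstant) y := by
      simpa using (hasDerivAt_id y).const_mul (-Real.eulerMascheroniConstant)
    exact (h1.sub (Real.hasDerivAt_log hy.ne')).add (hasDerivAt_Lfun hy)
  rw [hG.deriv]
  rfl

lemma trigamma_eq {x : ℝ} (hx : 0 < x) : trigamma x = S 2 x := by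
  rw [trigamma, show (2:ℕ) = 1+1 from rfl, iteratedDeriv_succ, iteratedDeriv_one]
  have hev : deriv (fun z => Real.log (Real.Gamma z)) =ᶠ[𝓝 x] psi := by
    filter_upwards [Ioi_mem_nhds hx] with z hz using deriv_logGamma hz
  rw [hev.deriv_eq]
  have hpsi : HasDerivAt psi (1/x^2 + ∑' k : ℕ, 1/(x+(k:ℝ)+1)^2) x := by
    have h1 : HasDerivAt (fun z : ℝ => -Real.eulerMascheroniConstant - z⁻¹) (1/x^2) x := by
      have := (hasDerivAt_inv hx.ne').const_sub (-Real.eulerMascheroniConstant)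
      exact this.congr_deriv (by rw [neg_neg, one_div])
    exact h1.add (hasDerivAt_psi1 hx)
  rw [hpsi.deriv, S_two_eq hx]

lemma hasDerivAt_S {m : ℕ} (hm : 2 ≤ m) {y : ℝ} (hy : 0 < y) :
    HasDerivAt (S m) (-(m:ℝ) * S (m+1) y) y := by
  have ha : (0:ℝ) < y/2 := by linarith
  have hmem : y ∈ Set.Ioo (y/2) (y+1) := ⟨by linarith, by linarith⟩
  have H := hasDerivAt_tsum_of_isPreconnected
    (g := fun (k:ℕ) (z:ℝ) => 1/(z+(k:ℝ))^m)
    (g' := fun (k:ℕ) (z:ℝ) => -(m:ℝ)/(z+(k:ℝ))^(m+1))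
    (u := fun k : ℕ => (m:ℝ) * ((4 * (1 + 1/(y/2)^(m+1))) * (1/((k:ℝ)+1)^2)))
    (((sum_inv_sq_summable.mul_left _).mul_left _)) isOpen_Ioo (convex_Ioo _ _).isPreconnected
    ?_ ?_ hmem (summable_S hm hy) hmem
  · have e2 : ∑' k : ℕ, (-(m:ℝ)/(y+(k:ℝ))^(m+1)) = -(m:ℝ) * S (m+1) y := by
      rw [S, ← tsum_mul_left]
      apply tsum_congr
      intro k
      rw [mul_one_div, neg_div]
    rw [e2] at H
    exact H
  · intro k z hz
    have hz0 : (0:ℝ) < z := lt_trans ha hz.1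
    have hzk : (0:ℝ) < z+(k:ℝ) := by positivity
    have h0 : HasDerivAt (fun w : ℝ => w+(k:ℝ)) 1 z := (hasDerivAt_id z).add_const _
    have h1 : HasDerivAt (fun w : ℝ => (w+(k:ℝ))^m) ((m:ℝ)*(z+(k:ℝ))^(m-1)) z := by
      simpa [Pi.pow_def] using h0.pow m
    have h2 := h1.inv (by positivity : (z+(k:ℝ))^m ≠ 0)
    have h3 : HasDerivAt (fun w : ℝ => 1/((w+(k:ℝ))^m))
        (-((m:ℝ) * (z + (k:ℝ)) ^ (m - 1)) / ((z + (k:ℝ)) ^ m) ^ 2) z := by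
      simpa only [one_div, Pi.inv_def] using h2
    have e : -((m:ℝ) * (z + (k:ℝ)) ^ (m - 1)) / ((z + (k:ℝ)) ^ m) ^ 2
        = -(m:ℝ)/(z+(k:ℝ))^(m+1) := by
      rw [← pow_mul, div_eq_div_iff (by positivity) (by positivity), neg_mul, neg_mul, neg_inj,
        mul_assoc, ← pow_add, show m-1+(m+1) = m*2 by omega]
    rw [e] at h3
    exact h3
  · intro k z hz
    have hz0 : (0:ℝ) < z := lt_trans ha hz.1
    have hzk : (0:ℝ) < z+(k:ℝ) := by positivity
    rw [Real.norm_eq_abs, abs_div, abs_neg, abs_of_nonneg (by positivity : (0:ℝ) ≤ (m:ℝ)),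
      abs_of_nonneg (by positivity : (0:ℝ) ≤ (z+(k:ℝ))^(m+1)), div_eq_mul_one_div]
    have hb := key_bound (by omega : 2 ≤ m+1) ha hz.1.le k
    exact mul_le_mul_of_nonneg_left hb (by positivity)
end
section
open Real Filter Topology Finset

noncomputable def gfun (n : ℕ) (y : ℝ) : ℝ :=
  (-1:ℝ)^n * (((n+1).factorial : ℝ) * S (n+2) y
    - (n.factorial : ℝ) / y^(n+1) - ((n+1).factorial : ℝ) / (2*y^(n+2)))

lemma hasDerivAt_gfun (n : ℕ) {y : ℝ} (hy : 0 < y) :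
    HasDerivAt (gfun n) (gfun (n+1) y) y := by
  have hS : HasDerivAt (S (n+2)) (-((n:ℝ)+2) * S (n+3) y) y := by
    have := hasDerivAt_S (by omega : 2 ≤ n+2) hy
    convert this using 2 <;> push_cast <;> ring
  have h2 : HasDerivAt (fun z : ℝ => (n.factorial : ℝ) / z^(n+1))
      ((n.factorial : ℝ) * (-(((n:ℝ)+1)*y^n) / (y^(n+1))^2)) y := by
    have hp := hasDerivAt_pow (n+1) y
    have := (hp.inv (by positivity : y^(n+1) ≠ 0)).const_mul (n.factorial : ℝ)
    simp only [Nat.add_sub_cancel, Pi.inv_def, show n+2-1 = n+1 from rfl, ← div_eq_mul_inv,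
      div_div] at this
    exact this.congr_deriv (by push_cast; ring)
  have h3 : HasDerivAt (fun z : ℝ => ((n+1).factorial : ℝ) / (2*z^(n+2)))
      ((((n+1).factorial : ℝ)/2) * (-(((n:ℝ)+2)*y^(n+1)) / (y^(n+2))^2)) y := by
    have hp := hasDerivAt_pow (n+2) y
    have := (hp.inv (by positivity : y^(n+2) ≠ 0)).const_mul (((n+1).factorial : ℝ)/2)
    simp only [Nat.add_sub_cancel, Pi.inv_def, show n+2-1 = n+1 from rfl, ← div_eq_mul_inv,
      div_div] at this
    exact this.congr_deriv (by push_cast; ring)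
  have hcomb := (((hS.const_mul (((n+1).factorial : ℝ))).sub h2).sub h3).const_mul ((-1:ℝ)^n)
  have hfun : (fun z => ((-1:ℝ)^n) * ((((n+1).factorial : ℝ) * S (n+2) z)
      - (n.factorial : ℝ) / z^(n+1) - ((n+1).factorial : ℝ) / (2*z^(n+2)))) = gfun n := rfl
  change HasDerivAt (gfun n) _ y at hcomb
  convert hcomb using 1
  rw [gfun]
  have hy' : y ≠ 0 := hy.ne'
  have hfact : ((n+1+1).factorial : ℝ) = ((n:ℝ)+2) * (((n+1).factorial : ℝ)) := by
    rw [Nat.factorial_succ]; push_cast; ring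
  have hfact2 : ((n+1).factorial : ℝ) = ((n:ℝ)+1) * ((n.factorial : ℝ)) := by
    rw [Nat.factorial_succ]; push_cast; ring
  rw [hfact, hfact2]
  field_simp
  ring
end
section
open Real Filter Topology Finset

lemma iterated_eq (n : ℕ) : ∀ {x : ℝ}, 0 < x →
    iteratedDeriv n (fun y => trigamma y - 1/y - 1/(2*y^2)) x = gfun n x := by
  induction n with
  | zero =>
    intro x hx
    rw [iteratedDeriv_zero, gfun, trigamma_eq hx]
    norm_num
  | succ n ih =>
    intro x hx
    rw [iteratedDeriv_succ]
    have hev : iteratedDeriv n (fun y => trigamma y - 1/y - 1/(2*y^2)) =ᶠ[𝓝 x] gfun n := by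
      filter_upwards [Ioi_mem_nhds hx] with z hz using ih hz
    rw [hev.deriv_eq, (hasDerivAt_gfun n hx).deriv]

theorem stmt15 : ∀ n : ℕ, ∀ x : ℝ, 0 < x →
    0 ≤ (-1 : ℝ)^n * iteratedDeriv n (fun y => trigamma y - 1/y - 1/(2*y^2)) x := by
  intro n x hx
  rw [iterated_eq n hx, gfun, ← mul_assoc, ← mul_pow]
  norm_num
  have hS := S_lower (by omega : 2 ≤ n+2) hx
  have hc : ((n+2:ℕ):ℝ) - 1 = (n:ℝ)+1 := by push_cast; ring
  rw [hc, show n+2-1 = n+1 from rfl] at hS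
  have hfpos : (0:ℝ) < ((n+1).factorial : ℝ) := by exact_mod_cast (n+1).factorial_pos
  have := mul_le_mul_of_nonneg_left hS hfpos.le
  have hfact2 : ((n+1).factorial : ℝ) = ((n:ℝ)+1) * ((n.factorial : ℝ)) := by
    rw [Nat.factorial_succ]; push_cast; ring
  have e1 : ((n+1).factorial : ℝ) * (1/(((n:ℝ)+1) * x^(n+1)) + 1/(2*x^(n+2)))
      = (n.factorial : ℝ) / x^(n+1) + ((n+1).factorial : ℝ) / (2*x^(n+2)) := by
    rw [hfact2]
    have h1 : ((n:ℝ)+1) ≠ 0 := by positivity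
    field_simp
  rw [e1] at this
  linarith
end
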